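/- Let e, x_1, ..., x_p be elements of a ring R with e^2 = e. Then for any non-negative integers k_1, ..., k_p, the multi-iterated commutator [e, x̄]_{k_1,...,k_p} can be written as ∑_{i_1=0}^{k_1} ⋯ ∑_{i_p=0}^{k_p} r_{i_1,...,i_p} · e · [e, x̄]_{i_1,...,i_p} for some elements r_{i_1,...,i_p} in R with an adjoined identity. -/
import Mathlib


/-- Iterated commutator: `itc a b 0 = a`, `itc a b (k+1) = [itc a b k, b]`. -/
def itc {R : Type*} [Ring R] (a b : R) : ℕ → R
  | 0 => a
  | k + 1 => itc a b k * b - b * itc a b k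

/-- Multi-iterated commutator `[a, b̄]_{k_1,…,k_p}` along a list of pairs `(b, k)`. -/
def mitc {R : Type*} [Ring R] (a : R) : List (R × ℕ) → R
  | [] => a
  | (b, k) :: t => mitc (itc a b k) t

namespace Stmt6Aux

variable {R : Type*} [Ring R]

/-- Domination relation on pairs: same ring element, smaller exponent. -/
def rel : R × ℕ → R × ℕ → Prop := fun q q' => q.1 = q'.1 ∧ q.2 ≤ q'.2

lemma rel_refl (q : R × ℕ) : rel q q := ⟨rfl, le_rfl⟩

/-- Domination relation on lists. -/
def Rel (L L' : List (R × ℕ)) : Prop := List.Forall₂ rel L L'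

lemma Rel_refl (L : List (R × ℕ)) : Rel L L :=
  List.forall₂_same.2 fun x _ => rel_refl x

lemma Rel_trans : ∀ {L1 L2 L3 : List (R × ℕ)}, Rel L1 L2 → Rel L2 L3 → Rel L1 L3 := by
  intro L1 L2 L3 h1 h2
  induction h2 generalizing L1 with
  | nil => cases h1; exact List.Forall₂.nil
  | cons hr _ ih =>
    cases h1 with
    | cons hr' ht' => exact List.Forall₂.cons ⟨hr'.1.trans hr.1, hr'.2.trans hr.2⟩ (ih ht')

lemma Rel_append : ∀ {L1 L2 L3 L4 : List (R × ℕ)}, Rel L1 L2 → Rel L3 L4 →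
    Rel (L1 ++ L3) (L2 ++ L4) := by
  intro L1 L2 L3 L4 h1 h2
  induction h1 with
  | nil => exact h2
  | cons hr _ ih => exact List.Forall₂.cons hr ih

lemma mitc_append (a : R) (L1 L2 : List (R × ℕ)) :
    mitc a (L1 ++ L2) = mitc (mitc a L1) L2 := by
  induction L1 generalizing a with
  | nil => rfl
  | cons q t ih => cases q; simp only [List.cons_append, mitc]; exact ih _

lemma mitc_singleton (a b : R) (i : ℕ) : mitc a [(b, i)] = itc a b i := rfl

/-- Generating set: `e` times dominated multi-commutators. -/
def GG (e : R) (L : List (R × ℕ)) : Set R :=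
  (fun L' => e * mitc e L') '' {L' | Rel L' L}

lemma GG_mono (e : R) {L1 L2 : List (R × ℕ)} (h : Rel L1 L2) : GG e L1 ⊆ GG e L2 := by
  rintro _ ⟨L', hL', rfl⟩
  exact ⟨L', Rel_trans hL' h, rfl⟩

/-- Auxiliary generating set for a single appended pair. -/
def GK (e : R) (L0 : List (R × ℕ)) (b : R) (k : ℕ) : Set R :=
  (fun q : List (R × ℕ) × ℕ => e * mitc e (q.1 ++ [(b, q.2)])) ''
    {q | Rel q.1 L0 ∧ q.2 ≤ k}

lemma GK_mono (e : R) (L0 : List (R × ℕ)) (b : R) {k k' : ℕ} (h : k ≤ k') :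
    GK e L0 b k ⊆ GK e L0 b k' := by
  rintro _ ⟨q, ⟨hq1, hq2⟩, rfl⟩
  exact ⟨q, ⟨hq1, hq2.trans h⟩, rfl⟩

lemma GK_subset (e : R) (L0 : List (R × ℕ)) (b : R) (k : ℕ) :
    GK e L0 b k ⊆ GG e (L0 ++ [(b, k)]) := by
  rintro _ ⟨⟨L', i⟩, ⟨h1, h2⟩, rfl⟩
  exact ⟨L' ++ [(b, i)],
    Rel_append h1 (List.Forall₂.cons ⟨rfl, h2⟩ List.Forall₂.nil), rfl⟩

/-- Core lemma: applying `itc · b k` to an element of the span lands in the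
span of the extended generating set. -/
lemma lemA (e : R) (L0 : List (R × ℕ)) (b : R)
    (H : ∀ m', Rel m' L0 → mitc e m' ∈ Submodule.span R (GG e L0)) :
    ∀ k, ∀ v ∈ Submodule.span R (GG e L0),
      itc v b k ∈ Submodule.span R (GK e L0 b k) := by
  intro k
  induction k using Nat.strong_induction_on with
  | _ k ih =>
  match k with
  | 0 =>
    intro v hv
    show v ∈ _
    refine Submodule.span_le.2 ?_ hv
    rintro _ ⟨L', hL', rfl⟩
    apply Submodule.subset_span
    refine ⟨(L', 0), ⟨hL', le_rfl⟩, ?_⟩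
    simp [mitc_append, mitc_singleton, itc]
  | (k + 1) =>
    intro v hv
    have hw : itc v b k ∈ Submodule.span R (GK e L0 b k) :=
      ih k (Nat.lt_succ_self k) v hv
    have hmono : Submodule.span R (GK e L0 b k) ≤ Submodule.span R (GK e L0 b (k + 1)) :=
      Submodule.span_mono (GK_mono e L0 b (Nat.le_succ k))
    show itc v b k * b - b * itc v b k ∈ _
    refine sub_mem ?_ ?_
    · -- multiplication on the right by b
      refine Submodule.span_induction (p := fun u _ => u * b ∈ Submodule.span R (GK e L0 b (k + 1)))
        ?_ ?_ ?_ ?_ hw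
      · rintro _ ⟨⟨L', i⟩, ⟨h1, h2⟩, rfl⟩
        simp only at h1 h2
        have hm : mitc e (L' ++ [(b, i)]) = itc (mitc e L') b i := by
          rw [mitc_append, mitc_singleton]
        have hm1 : mitc e (L' ++ [(b, i + 1)]) =
            mitc e (L' ++ [(b, i)]) * b - b * mitc e (L' ++ [(b, i)]) := by
          rw [mitc_append, mitc_singleton, mitc_append, mitc_singleton]; rfl
        have key : (e * mitc e (L' ++ [(b, i)])) * b =
            e * mitc e (L' ++ [(b, i + 1)]) + (e * b) * mitc e (L' ++ [(b, i)]) := by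
          rw [hm1]; noncomm_ring
        rw [key]
        refine add_mem (Submodule.subset_span ⟨(L', i + 1), ⟨h1, Nat.succ_le_succ h2⟩, rfl⟩) ?_
        have hmmem : mitc e (L' ++ [(b, i)]) ∈ Submodule.span R (GK e L0 b (k + 1)) := by
          rw [hm]
          exact Submodule.span_mono (GK_mono e L0 b (h2.trans (Nat.le_succ k)))
            (ih i (Nat.lt_succ_of_le h2) (mitc e L') (H L' h1))
        simpa [smul_eq_mul] using Submodule.smul_mem _ (e * b) hmmem
      · simp
      · intro u1 u2 _ _ h1 h2
        rw [add_mul]; exact add_mem h1 h2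
      · intro a u _ h
        rw [smul_eq_mul, mul_assoc]
        simpa [smul_eq_mul] using Submodule.smul_mem _ a h
    · simpa [smul_eq_mul] using Submodule.smul_mem _ b (hmono hw)

/-- Main lemma: the multi-iterated commutator of an idempotent lies in the
left span of `e` times dominated multi-iterated commutators. -/
lemma main (e : R) (he : e * e = e) :
    ∀ n (L : List (R × ℕ)), L.length = n →
      mitc e L ∈ Submodule.span R (GG e L) := by
  intro n
  induction n with
  | zero =>
    intro L hL
    rw [List.length_eq_zero_iff] at hL
    subst hL
    exact Submodule.subset_span ⟨[], List.Forall₂.nil, by simpa [mitc] using he⟩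
  | succ n ih =>
    intro L hL
    rcases List.eq_nil_or_concat L with rfl | ⟨L0, ⟨b, k⟩, rfl⟩
    · simp at hL
    · have hlen : L0.length = n := by
        simpa [List.concat_eq_append] using hL
      have H : ∀ m', Rel m' L0 → mitc e m' ∈ Submodule.span R (GG e L0) := by
        intro m' hm'
        have hl : m'.length = n := by rw [List.Forall₂.length_eq hm', hlen]
        exact Submodule.span_mono (GG_mono e hm') (ih m' hl)
      have hv := ih L0 hlen
      have hA := lemA e L0 b H k (mitc e L0) hv
      rw [List.concat_eq_append, mitc_append, mitc_singleton]
      exact Submodule.span_mono (GK_subset e L0 b k) hA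

end Stmt6Aux

/-- For idempotent `e`, `[e,x̄]_{k_1,…,k_p} = ∑_{i_1≤k_1,…,i_p≤k_p}
r_{i_1,…,i_p} · e · [e,x̄]_{i_1,…,i_p}` with coefficients from `R` with an adjoined
identity (integer part `z i` plus ring part `r i`). -/
theorem stmt_6 {R : Type*} [Ring R] (p : ℕ) (e : R) (x : Fin p → R)
    (he : e * e = e) (k : Fin p → ℕ) :
    ∃ (r : ((j : Fin p) → Fin (k j + 1)) → R)
      (z : ((j : Fin p) → Fin (k j + 1)) → ℤ),
      mitc e (List.ofFn fun j => (x j, k j)) =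
        ∑ i : (j : Fin p) → Fin (k j + 1),
          (z i • (e * mitc e (List.ofFn fun j => (x j, (i j : ℕ)))) +
            r i * (e * mitc e (List.ofFn fun j => (x j, (i j : ℕ))))) := by
  classical
  have hmem : mitc e (List.ofFn fun j => (x j, k j)) ∈
      Submodule.span R (Stmt6Aux.GG e (List.ofFn fun j => (x j, k j))) :=
    Stmt6Aux.main e he _ _ rfl
  have hsub : Stmt6Aux.GG e (List.ofFn fun j => (x j, k j)) ⊆
      Set.range (fun i : (j : Fin p) → Fin (k j + 1) =>
        e * mitc e (List.ofFn fun j => (x j, (i j : ℕ)))) := by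
    rintro _ ⟨L', hL', rfl⟩
    have hL'' : List.Forall₂ Stmt6Aux.rel L' (List.ofFn fun j => (x j, k j)) := hL'
    rw [List.forall₂_iff_get] at hL''
    obtain ⟨hlen, hget⟩ := hL''
    have hlenL' : L'.length = p := by simpa using hlen
    refine ⟨fun j => ⟨(L'.get ⟨(j : ℕ), by omega⟩).2, ?_⟩, ?_⟩
    · have h₂ : (j : ℕ) < (List.ofFn fun j => (x j, k j)).length := by
        simp [j.isLt]
      have h2 := (hget (j : ℕ) (by omega) h₂).2
      rw [List.get_ofFn] at h2
      simp only [Fin.cast_mk, Fin.eta] at h2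
      exact Nat.lt_succ_of_le h2
    · show e * mitc e _ = e * mitc e L'
      congr 1
      congr 1
      refine List.ext_get (by simpa using hlenL'.symm) ?_
      intro n h1 h2
      have hn : n < p := by omega
      have h₂ : n < (List.ofFn fun j => (x j, k j)).length := by simpa using hn
      have hx1 := (hget n (by omega) h₂).1
      rw [List.get_ofFn] at hx1
      rw [List.get_ofFn]
      simp only [Fin.cast_mk] at hx1 ⊢
      refine Prod.ext ?_ ?_
      · exact hx1.symm
      · rfl
  have hmem2 := Submodule.span_mono hsub hmem
  obtain ⟨c, hc⟩ := (Submodule.mem_span_range_iff_exists_fun R).1 hmem2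
  refine ⟨c, fun _ => 0, ?_⟩
  rw [← hc]
  refine Finset.sum_congr rfl fun i _ => ?_
  simp [smul_eq_mul]
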